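/- With double exponential slab and noise variance σ², the posterior median satisfies δ(c;w,b,c) − c → 0 as c → +∞: there is asymptotically no shrinkage at the data-driven location c. -/
import Mathlib


open MeasureTheory Real

/-- Normal density with mean `0` and standard deviation `σ`. -/
noncomputable def phiS (σ x : ℝ) : ℝ :=
  (σ * Real.sqrt (2 * Real.pi))⁻¹ * Real.exp (-x ^ 2 / (2 * σ ^ 2))

/-- Double exponential slab `γ(μ;b,c) = (b/2) e^{−b|μ−c|}`. -/
noncomputable def deSlab (b c μ : ℝ) : ℝ := b / 2 * Real.exp (-b * |μ - c|)

/-- Convolution `g(x;b,c)` of the noise density `φ_{0,σ²}` with the slab. -/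
noncomputable def gS (σ b c x : ℝ) : ℝ := ∫ μ : ℝ, phiS σ (x - μ) * deSlab b c μ

/-- Marginal density `m(x;w,b,c) = (1−w)φ_{0,σ²}(x) + w g(x;b,c)`. -/
noncomputable def mS (σ w b c x : ℝ) : ℝ := (1 - w) * phiS σ x + w * gS σ b c x

/-- Posterior CDF of `μ` given `X = x` under the spike-and-slab prior
`(1−w)δ₀ + w·(b/2)e^{−b|μ−c|}` and likelihood `X | μ ∼ N(μ,σ²)`. -/
noncomputable def postCDFS (σ w b c x t : ℝ) : ℝ :=
  ((1 - w) * phiS σ x * (if (0:ℝ) ≤ t then 1 else 0)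
    + w * ∫ μ in Set.Iic t, phiS σ (x - μ) * deSlab b c μ) / mS σ w b c x

/-- Posterior median `δ(x;w,b,c)`. -/
noncomputable def deltaS (σ w b c x : ℝ) : ℝ :=
  sInf {t : ℝ | 1 / 2 ≤ postCDFS σ w b c x t}

/-! ### Auxiliary definitions and lemmas -/

/-- The (even) integrand `φ_σ(s)·(b/2)e^{−b|s|}` appearing after centering at `c`. -/
noncomputable def fDE (σ b s : ℝ) : ℝ := phiS σ s * deSlab b 0 s

lemma phiS_pos {σ : ℝ} (hσ : 0 < σ) (x : ℝ) : 0 < phiS σ x := by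
  have h2π : 0 < Real.sqrt (2 * Real.pi) := Real.sqrt_pos.2 (by positivity)
  exact mul_pos (inv_pos.2 (mul_pos hσ h2π)) (Real.exp_pos _)

lemma phiS_cont (σ : ℝ) : Continuous (phiS σ) := by
  unfold phiS; fun_prop

lemma deSlab_pos {b : ℝ} (hb : 0 < b) (c μ : ℝ) : 0 < deSlab b c μ :=
  mul_pos (by linarith) (Real.exp_pos _)

lemma deSlab_cont (b c : ℝ) : Continuous (deSlab b c) := by
  unfold deSlab; fun_prop

lemma fDE_pos {σ b : ℝ} (hσ : 0 < σ) (hb : 0 < b) (s : ℝ) : 0 < fDE σ b s :=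
  mul_pos (phiS_pos hσ s) (deSlab_pos hb 0 s)

lemma fDE_cont (σ b : ℝ) : Continuous (fDE σ b) :=
  (phiS_cont σ).mul (deSlab_cont b 0)

lemma fDE_int {σ b : ℝ} (hσ : 0 < σ) (hb : 0 < b) : Integrable (fDE σ b) := by
  have hg : Integrable (fun x : ℝ => (σ * Real.sqrt (2 * Real.pi))⁻¹ * (b/2) *
      Real.exp (-(1/(2*σ^2)) * x ^ 2)) :=
    (integrable_exp_neg_mul_sq (by positivity)).const_mul _
  refine hg.mono ((fDE_cont σ b).aestronglyMeasurable) (Filter.Eventually.of_forall fun x => ?_)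
  have h1 : fDE σ b x ≤ (σ * Real.sqrt (2 * Real.pi))⁻¹ * (b/2) *
      Real.exp (-(1/(2*σ^2)) * x ^ 2) := by
    have he : Real.exp (-b * |x - 0|) ≤ 1 := by
      apply Real.exp_le_one_iff.2
      have := abs_nonneg (x - 0)
      nlinarith
    have heq : -x^2/(2*σ^2) = -(1/(2*σ^2)) * x^2 := by ring
    unfold fDE phiS deSlab
    rw [heq]
    calc (σ * Real.sqrt (2 * Real.pi))⁻¹ * Real.exp (-(1/(2*σ^2)) * x ^ 2) *
          (b / 2 * Real.exp (-b * |x - 0|))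
        ≤ (σ * Real.sqrt (2 * Real.pi))⁻¹ * Real.exp (-(1/(2*σ^2)) * x ^ 2) * (b / 2 * 1) := by
          apply mul_le_mul_of_nonneg_left
          · exact mul_le_mul_of_nonneg_left he (by linarith)
          · positivity
      _ = (σ * Real.sqrt (2 * Real.pi))⁻¹ * (b/2) * Real.exp (-(1/(2*σ^2)) * x ^ 2) := by ring
  rw [Real.norm_eq_abs, Real.norm_eq_abs, abs_of_pos (fDE_pos hσ hb x),
    abs_of_pos (by positivity)]
  exact h1

lemma fDE_even (σ b s : ℝ) : fDE σ b (-s) = fDE σ b s := by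
  unfold fDE phiS deSlab
  simp [neg_pow, abs_neg]

lemma shift_integrand (σ b c μ : ℝ) :
    phiS σ (c - μ) * deSlab b c μ = fDE σ b (μ - c) := by
  unfold fDE phiS deSlab
  have h : (c - μ)^2 = (μ - c)^2 := by ring
  rw [h, sub_zero]

lemma Iic_shift (σ b t c : ℝ) :
    ∫ μ in Set.Iic t, fDE σ b (μ - c) = ∫ s in Set.Iic (t - c), fDE σ b s := by
  rw [← integral_indicator measurableSet_Iic, ← integral_indicator measurableSet_Iic]
  have h : ∀ μ : ℝ, (Set.Iic t).indicator (fun μ => fDE σ b (μ - c)) μ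
      = (Set.Iic (t - c)).indicator (fDE σ b) (μ - c) := by
    intro μ
    by_cases hμ : μ ≤ t
    · simp [Set.indicator_apply, Set.mem_Iic, hμ, sub_le_sub_iff_right]
    · simp [Set.indicator_apply, Set.mem_Iic, hμ, sub_le_sub_iff_right]
  simp_rw [h]
  exact integral_sub_right_eq_self ((Set.Iic (t - c)).indicator (fDE σ b)) c

lemma full_shift (σ b c : ℝ) :
    ∫ μ : ℝ, fDE σ b (μ - c) = ∫ s : ℝ, fDE σ b s :=
  integral_sub_right_eq_self (fDE σ b) c

lemma H_half (σ b : ℝ) (hint : Integrable (fDE σ b)) :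
    2 * ∫ s in Set.Iic (0:ℝ), fDE σ b s = ∫ s : ℝ, fDE σ b s := by
  have h1 : ∫ s in Set.Iic (0:ℝ), fDE σ b s = ∫ s in Set.Ioi (0:ℝ), fDE σ b s := by
    have := integral_comp_neg_Iic (0:ℝ) (fDE σ b)
    simp only [fDE_even, neg_zero] at this
    exact this
  have h2 : (∫ s in Set.Iic (0:ℝ), fDE σ b s) + ∫ s in Set.Ioi (0:ℝ), fDE σ b s
      = ∫ s : ℝ, fDE σ b s := by
    have := integral_add_compl (measurableSet_Iic (a := (0:ℝ))) hint
    rwa [Set.compl_Iic] at this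
  rw [two_mul]
  nth_rewrite 2 [h1]
  exact h2

lemma H_strictMono {σ b : ℝ} (hσ : 0 < σ) (hb : 0 < b) {u v : ℝ} (huv : u < v) :
    (∫ s in Set.Iic u, fDE σ b s) < ∫ s in Set.Iic v, fDE σ b s := by
  have hint := fDE_int hσ hb
  have hsplit : ∫ s in Set.Iic v, fDE σ b s
      = (∫ s in Set.Iic u, fDE σ b s) + ∫ s in Set.Ioc u v, fDE σ b s := by
    rw [← Set.Iic_union_Ioc_eq_Iic huv.le]
    exact setIntegral_union (Set.Iic_disjoint_Ioc le_rfl) measurableSet_Ioc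
      hint.integrableOn hint.integrableOn
  have hpos : 0 < ∫ s in Set.Ioc u v, fDE σ b s := by
    rw [← intervalIntegral.integral_of_le huv.le]
    exact intervalIntegral.intervalIntegral_pos_of_pos_on hint.intervalIntegrable
      (fun x _ => fDE_pos hσ hb x) huv
  linarith

lemma phiS_tendsto {σ : ℝ} (hσ : 0 < σ) :
    Filter.Tendsto (fun c : ℝ => phiS σ c) Filter.atTop (nhds 0) := by
  have hsq : Filter.Tendsto (fun c : ℝ => c ^ 2) Filter.atTop Filter.atTop :=
    Filter.tendsto_pow_atTop two_ne_zero
  have hdiv : Filter.Tendsto (fun c : ℝ => c ^ 2 / (2 * σ ^ 2)) Filter.atTop Filter.atTop :=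
    hsq.atTop_div_const (by positivity)
  have hbot : Filter.Tendsto (fun c : ℝ => -c ^ 2 / (2 * σ ^ 2)) Filter.atTop Filter.atBot := by
    simp only [neg_div]
    exact Filter.tendsto_neg_atBot_iff.mpr hdiv
  have hexp := Real.tendsto_exp_atBot.comp hbot
  have := hexp.const_mul ((σ * Real.sqrt (2 * Real.pi))⁻¹)
  simpa [phiS, Function.comp, mul_zero] using this

/-- With double-exponential slab and noise variance `σ²`, there is asymptotically
no shrinkage at the data-driven location: `δ(c;w,b,c) − c → 0` as `c → +∞`. -/
theorem stmt17 (σ w b : ℝ) (hσ : 0 < σ) (hb : 0 < b) (hw : 0 < w) (hw1 : w ≤ 1) :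
    Filter.Tendsto (fun c : ℝ => deltaS σ w b c c - c) Filter.atTop (nhds 0) := by
  have hint := fDE_int hσ hb
  set G : ℝ := ∫ s : ℝ, fDE σ b s with hGdef
  set H : ℝ → ℝ := fun t => ∫ s in Set.Iic t, fDE σ b s with hHdef
  have hHmono : ∀ u v : ℝ, u < v → H u < H v := fun u v h => H_strictMono hσ hb h
  have hHle : ∀ u v : ℝ, u ≤ v → H u ≤ H v := by
    intro u v h
    rcases h.lt_or_eq with h | h
    · exact (hHmono u v h).le
    · rw [h]
  have hH0 : 2 * H 0 = G := H_half σ b hint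
  have hHnn : ∀ t, 0 ≤ H t := fun t =>
    setIntegral_nonneg measurableSet_Iic (fun x _ => (fDE_pos hσ hb x).le)
  have hGpos : 0 < G := by
    have h1 := hHmono (-1) 0 (by norm_num)
    have h2 := hHnn (-1)
    linarith
  have hgS : ∀ c, gS σ b c c = G := by
    intro c; unfold gS
    simp_rw [shift_integrand]
    exact full_shift σ b c
  have hmS : ∀ c, mS σ w b c c = (1 - w) * phiS σ c + w * G := by
    intro c; unfold mS; rw [hgS]
  have hpost : ∀ c t, postCDFS σ w b c c t
      = ((1 - w) * phiS σ c * (if (0:ℝ) ≤ t then 1 else 0) + w * H (t - c))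
        / ((1 - w) * phiS σ c + w * G) := by
    intro c t
    unfold postCDFS
    rw [hmS]
    congr 2
    simp_rw [shift_integrand]
    rw [Iic_shift σ b t c]
  rw [Metric.tendsto_atTop]
  intro ε hε
  set ε' : ℝ := ε / 2 with hε'def
  have hε'pos : 0 < ε' := by positivity
  have hκ : 0 < 2 * w * (H 0 - H (-ε')) := by
    have := hHmono (-ε') 0 (by linarith)
    nlinarith
  have hev : ∀ᶠ c : ℝ in Filter.atTop,
      (1 - w) * phiS σ c < 2 * w * (H 0 - H (-ε')) := by
    have h : Filter.Tendsto (fun c : ℝ => (1 - w) * phiS σ c) Filter.atTop (nhds ((1 - w) * 0)) :=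
      (phiS_tendsto hσ).const_mul _
    rw [mul_zero] at h
    exact h.eventually_lt_const hκ
  have hev2 : ∀ᶠ c : ℝ in Filter.atTop, (0:ℝ) ≤ c := Filter.eventually_ge_atTop 0
  obtain ⟨N, hN⟩ := Filter.eventually_atTop.1 (hev.and hev2)
  refine ⟨N, fun c hc => ?_⟩
  obtain ⟨hφc, hc0⟩ := hN c hc
  have hφnn : 0 ≤ (1 - w) * phiS σ c :=
    mul_nonneg (by linarith) (phiS_pos hσ c).le
  set D : ℝ := (1 - w) * phiS σ c + w * G with hDdef
  have hDpos : 0 < D := by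
    have := mul_pos hw hGpos
    rw [hDdef]; linarith
  set S : Set ℝ := {t : ℝ | 1 / 2 ≤ postCDFS σ w b c c t} with hSdef
  have hmem : c + ε' ∈ S := by
    rw [hSdef, Set.mem_setOf_eq, hpost]
    have hind : (if (0:ℝ) ≤ c + ε' then (1:ℝ) else 0) = 1 := if_pos (by linarith)
    rw [hind]
    rw [le_div_iff₀ hDpos]
    have hsub : c + ε' - c = ε' := by ring
    rw [hsub]
    have h0ε := hHle 0 ε' hε'pos.le
    nlinarith
  have hlb : ∀ t ∈ S, c - ε' ≤ t := by
    intro t ht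
    by_contra hlt
    push_neg at hlt
    rw [hSdef, Set.mem_setOf_eq, hpost, le_div_iff₀ hDpos] at ht
    have hts : H (t - c) ≤ H (-ε') := hHle _ _ (by linarith)
    have hind : (if (0:ℝ) ≤ t then (1:ℝ) else 0) ≤ 1 := by split <;> norm_num
    have h1 : (1 - w) * phiS σ c * (if (0:ℝ) ≤ t then (1:ℝ) else 0)
        ≤ (1 - w) * phiS σ c := by
      calc (1 - w) * phiS σ c * (if (0:ℝ) ≤ t then (1:ℝ) else 0)
          ≤ (1 - w) * phiS σ c * 1 := mul_le_mul_of_nonneg_left hind hφnn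
        _ = (1 - w) * phiS σ c := mul_one _
    nlinarith [mul_le_mul_of_nonneg_left hts hw.le]
  have hBdd : BddBelow S := ⟨c - ε', fun t ht => hlb t ht⟩
  have hne : S.Nonempty := ⟨c + ε', hmem⟩
  have hdelta : deltaS σ w b c c = sInf S := rfl
  have h1 : deltaS σ w b c c ≤ c + ε' := by rw [hdelta]; exact csInf_le hBdd hmem
  have h2 : c - ε' ≤ deltaS σ w b c c := by rw [hdelta]; exact le_csInf hne hlb
  rw [Real.dist_eq, sub_zero]
  have : |deltaS σ w b c c - c| ≤ ε' := abs_le.2 ⟨by linarith, by linarith⟩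
  linarith
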